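/- arXiv:1811.01472 — 2 statements merged into one kernel-verified Lean document; each statement's English description precedes it below -/
import Mathlib

section
/- If a string T is generated by an SLP with n variables, then the number of distinct bigrams occurring in T (i.e., distinct length-2 substrings of T) is at most n. -/
/-- A straight-line program (SLP) over an alphabet `α` with `n` variables `X_1, …, X_n`
(represented by `Fin n`, where index `i : Fin n` stands for `X_{i+1}`).  Each variable
has a righthand side: a pair of symbols, each either a terminal (`Sum.inl a`) or a
variable of strictly smaller index (`Sum.inr j` with `j < i`). -/
structure SLP (α : Type*) where
  /-- the number of variables -/
  n : ℕ
  /-- the righthand sides -/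
  D : Fin n → (α ⊕ Fin n) × (α ⊕ Fin n)
  lt_left : ∀ i j, (D i).1 = Sum.inr j → j < i
  lt_right : ∀ i j, (D i).2 = Sum.inr j → j < i

/-- The expansion `val` of a variable: `val (X_i) = val (D(X_i)[1]) · val (D(X_i)[2])`,
where terminals expand to themselves. -/
def SLP.val {α : Type*} (G : SLP α) (i : Fin G.n) : List α :=
  (match h : (G.D i).1 with
   | Sum.inl a => [a]
   | Sum.inr j => G.val j) ++
  (match h : (G.D i).2 with
   | Sum.inl a => [a]
   | Sum.inr j => G.val j)
termination_by i.val
decreasing_by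
  · exact G.lt_left i j h
  · exact G.lt_right i j h


def SLP.ex {α : Type*} (G : SLP α) (x : α ⊕ Fin G.n) : List α :=
  match x with
  | Sum.inl a => [a]
  | Sum.inr j => G.val j

lemma SLP.val_eq {α : Type*} (G : SLP α) (i : Fin G.n) :
    G.val i = G.ex (G.D i).1 ++ G.ex (G.D i).2 := by
  rw [SLP.val]
  congr 1 <;> [rcases h : (G.D i).1 with a | j; rcases h : (G.D i).2 with a | j] <;>
    simp [SLP.ex, h]

lemma SLP.ex_ne_nil {α : Type*} (G : SLP α) (x : α ⊕ Fin G.n) : G.ex x ≠ [] := by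
  rcases x with a | j
  · simp [SLP.ex]
  · show G.val j ≠ []
    have H : ∀ m, ∀ j : Fin G.n, j.val < m → G.val j ≠ [] := by
      intro m
      induction m with
      | zero => intro j hj; omega
      | succ m ih =>
        intro j hj
        rw [G.val_eq j]
        rcases h : (G.D j).1 with a | k
        · intro hc
          exact absurd (List.append_eq_nil_iff.mp hc).1 (by simp [SLP.ex])
        · have hk : k.val < m := by
            have h2 : k.val < j.val := G.lt_left j k h
            omega
          intro hc
          exact absurd (List.append_eq_nil_iff.mp hc).1 (ih k hk)
    exact H (j.val + 1) j (by omega)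

lemma bigram_append {α : Type*} (L R : List α) (hL : L ≠ []) (hR : R ≠ []) (k : ℕ)
    (p : α × α) (h1 : (L ++ R)[k]? = some p.1) (h2 : (L ++ R)[k + 1]? = some p.2) :
    (∃ k', L[k']? = some p.1 ∧ L[k' + 1]? = some p.2) ∨
    (∃ k', R[k']? = some p.1 ∧ R[k' + 1]? = some p.2) ∨
    (p.1 = L.getLast hL ∧ p.2 = R.head hR) := by
  rcases lt_trichotomy (k + 1) L.length with h | h | h
  · left
    exact ⟨k, by rw [List.getElem?_append_left (by omega)] at h1; exact h1,
      by rw [List.getElem?_append_left h] at h2; exact h2⟩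
  · right; right
    rw [List.getElem?_append_left (by omega)] at h1
    rw [List.getElem?_append_right (by omega)] at h2
    constructor
    · have : L.getLast hL = L[L.length - 1] := List.getLast_eq_getElem hL
      rw [this]
      have : L[L.length - 1]? = some L[L.length - 1] := List.getElem?_eq_getElem (by
        have := List.length_pos_iff.mpr hL; omega)
      have hk : k = L.length - 1 := by omega
      rw [hk] at h1; rw [this] at h1; exact (Option.some_inj.mp h1).symm
    · have : k + 1 - L.length = 0 := by omega
      rw [this, ← List.head?_eq_getElem?, List.head?_eq_head hR] at h2
      exact (Option.some_inj.mp h2).symm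
  · right; left
    rw [List.getElem?_append_right (by omega)] at h1
    rw [List.getElem?_append_right (by omega)] at h2
    refine ⟨k - L.length, h1, ?_⟩
    have : k + 1 - L.length = k - L.length + 1 := by omega
    rw [this] at h2; exact h2

noncomputable def SLP.bd {α : Type*} (G : SLP α) (i : Fin G.n) : α × α :=
  ((G.ex (G.D i).1).getLast (G.ex_ne_nil _), (G.ex (G.D i).2).head (G.ex_ne_nil _))

lemma SLP.bigram_mem {α : Type*} (G : SLP α) (i : Fin G.n) (p : α × α)
    (h : ∃ k, (G.val i)[k]? = some p.1 ∧ (G.val i)[k + 1]? = some p.2) :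
    ∃ j : Fin G.n, j ≤ i ∧ p = G.bd j := by
  have H : ∀ m, ∀ i : Fin G.n, i.val < m → ∀ p : α × α,
      (∃ k, (G.val i)[k]? = some p.1 ∧ (G.val i)[k + 1]? = some p.2) →
      ∃ j : Fin G.n, j ≤ i ∧ p = G.bd j := by
    intro m
    induction m with
    | zero => intro i hi; omega
    | succ m ih =>
    intro i hi p h
    obtain ⟨k, h1, h2⟩ := h
    rw [G.val_eq i] at h1 h2
    rcases bigram_append _ _ (G.ex_ne_nil _) (G.ex_ne_nil _) k p h1 h2 with
      ⟨k', hk1, hk2⟩ | ⟨k', hk1, hk2⟩ | ⟨hq1, hq2⟩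
    · rcases hx : (G.D i).1 with a | j
      · rw [hx] at hk2; simp [SLP.ex] at hk2
      · rw [hx] at hk1 hk2
        obtain ⟨j', hj', hp⟩ := ih j (by have : j.val < i.val := G.lt_left i j hx; omega) p ⟨k', hk1, hk2⟩
        exact ⟨j', le_trans hj' (le_of_lt (G.lt_left i j hx)), hp⟩
    · rcases hx : (G.D i).2 with a | j
      · rw [hx] at hk2; simp [SLP.ex] at hk2
      · rw [hx] at hk1 hk2
        obtain ⟨j', hj', hp⟩ := ih j (by have : j.val < i.val := G.lt_right i j hx; omega) p ⟨k', hk1, hk2⟩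
        exact ⟨j', le_trans hj' (le_of_lt (G.lt_right i j hx)), hp⟩
    · exact ⟨i, le_refl i, Prod.ext hq1 hq2⟩
  exact H (i.val + 1) i (by omega) p h


/-- if a string `T` is generated by an SLP with `n` variables, then the
number of distinct bigrams occurring in `T` (distinct length-2 substrings of `T`) is at
most `n`. -/
theorem slp_distinct_bigrams_le {α : Type*} (G : SLP α) (hn : 0 < G.n) :
    {p : α × α | ∃ i : ℕ,
        (G.val ⟨G.n - 1, by omega⟩)[i]? = some p.1 ∧
        (G.val ⟨G.n - 1, by omega⟩)[i + 1]? = some p.2}.Finite ∧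
    {p : α × α | ∃ i : ℕ,
        (G.val ⟨G.n - 1, by omega⟩)[i]? = some p.1 ∧
        (G.val ⟨G.n - 1, by omega⟩)[i + 1]? = some p.2}.ncard ≤ G.n := by
  have hsub : {p : α × α | ∃ i : ℕ,
        (G.val ⟨G.n - 1, by omega⟩)[i]? = some p.1 ∧
        (G.val ⟨G.n - 1, by omega⟩)[i + 1]? = some p.2} ⊆ Set.range G.bd := by
    intro p hp
    obtain ⟨j, _, hp⟩ := G.bigram_mem _ p hp
    exact ⟨j, hp.symm⟩
  refine ⟨Set.Finite.subset (Set.finite_range G.bd) hsub, ?_⟩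
  calc _ ≤ (Set.range G.bd).ncard := Set.ncard_le_ncard hsub (Set.finite_range _)
    _ = (G.bd '' Set.univ).ncard := by rw [Set.image_univ]
    _ ≤ (Set.univ : Set (Fin G.n)).ncard := Set.ncard_image_le Set.finite_univ
    _ = G.n := by rw [Set.ncard_univ]; simp
end

section
/- Consider a context-free grammar over terminals Σ with variables X_1, …, X_n in which each righthand side D(X_i) is a nonempty string over Σ ∪ {X_1, …, X_{i−1}}, with expansion val defined by val(a) = a for a ∈ Σ and val(X_i) equal to the concatenation of the expansions of the symbols of D(X_i), generating T = val(X_n). Its derivation tree is the ordered tree rooted at a node labeled X_n in which every node labeled by a variable X has |D(X)| children labeled in order by the symbols of D(X), and terminal-labeled nodes are leaves. If every variable labels at least one node of the derivation tree, then the total number of terminal occurrences in all righthand sides, Σ_{i=1}^{n} (number of positions of D(X_i) holding a terminal), is at most |T|. -/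
/-- A context-free grammar over terminals `α` with `n` variables `X_1, …, X_n`
(represented by `Fin n`), in which each righthand side `D X_i` is a nonempty string over
the terminals and the variables of strictly smaller index. -/
structure CFGGrammar (α : Type*) where
  /-- the number of variables -/
  n : ℕ
  /-- the righthand sides -/
  D : Fin n → List (α ⊕ Fin n)
  ne : ∀ i, D i ≠ []
  lt : ∀ i j, Sum.inr j ∈ D i → j < i

/-- The expansion of a variable: the concatenation of the expansions of the symbols of
its righthand side, where terminals expand to themselves. -/
def CFGGrammar.val {α : Type*} (G : CFGGrammar α) (i : Fin G.n) : List α :=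
  ((G.D i).attach.map (fun s =>
    match h : s.1 with
    | Sum.inl a => [a]
    | Sum.inr j => G.val j)).flatten
termination_by i.val
decreasing_by exact G.lt i j (h ▸ s.2)

/-- `G.voccBelow X i` is the number of nodes labeled `X` in the subtree of the derivation
tree rooted at a node labeled by the variable `i`; taking `i` to be the start variable,
it is the number of nodes of the derivation tree labeled `X`. -/
def CFGGrammar.voccBelow {α : Type*} (G : CFGGrammar α) (X : Fin G.n) (i : Fin G.n) : ℕ :=
  (if i = X then 1 else 0) +
  ((G.D i).attach.map (fun s =>
    match h : s.1 with
    | Sum.inl _ => 0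
    | Sum.inr j => G.voccBelow X j)).sum
termination_by i.val
decreasing_by exact G.lt i j (h ▸ s.2)

private lemma cfg_sum_swap {ι β : Type*} [Fintype ι] (l : List β) (f : β → ι → ℕ) :
    ∑ X : ι, (l.map (fun s => f s X)).sum = (l.map (fun s => ∑ X : ι, f s X)).sum := by
  induction l with
  | nil => simp
  | cons a t ih => simp [Finset.sum_add_distrib, ih]

private lemma cfg_sum_mul {β : Type*} (l : List β) (f : β → ℕ) (r : ℕ) :
    (l.map f).sum * r = (l.map (fun x => f x * r)).sum := by
  induction l with
  | nil => simp
  | cons a t ih => simp [add_mul, ih]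

private lemma cfg_sum_add {β : Type*} (l : List β) (f g : β → ℕ) :
    (l.map f).sum + (l.map g).sum = (l.map (fun x => f x + g x)).sum := by
  induction l with
  | nil => simp
  | cons a t ih => rw [List.map_cons, List.map_cons, List.map_cons,
      List.sum_cons, List.sum_cons, List.sum_cons, ← ih]; ring

private lemma cfg_key {α : Type*} (G : CFGGrammar α) :
    ∀ m : ℕ, ∀ i : Fin G.n, i.val = m →
      (G.val i).length = ∑ X : Fin G.n,
        G.voccBelow X i * (G.D X).countP (fun s => s.isLeft) := by
  intro m
  induction m using Nat.strong_induction_on with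
  | _ m ih =>
  intro i him
  have hL : (G.val i).length = ((G.D i).attach.map (fun s =>
      match s.1 with
      | Sum.inl _ => 1
      | Sum.inr j => (G.val j).length)).sum := by
    rw [CFGGrammar.val, List.length_flatten, List.map_map]
    congr 1
    apply List.map_congr_left
    intro s _
    obtain ⟨s, hmem⟩ := s
    cases s <;> simp
  have hV : ∀ X : Fin G.n, G.voccBelow X i = (if i = X then 1 else 0) +
      ((G.D i).attach.map (fun s =>
        match s.1 with
        | Sum.inl _ => 0
        | Sum.inr j => G.voccBelow X j)).sum := by
    intro X
    rw [CFGGrammar.voccBelow]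
    congr 2
    apply List.map_congr_left
    intro s _
    obtain ⟨s, hmem⟩ := s
    cases s <;> simp
  have hCi : (G.D i).countP (fun s => s.isLeft) =
      ((G.D i).attach.map (fun s =>
        match s.1 with
        | Sum.inl _ => 1
        | Sum.inr _ => 0)).sum := by
    conv_lhs => rw [← List.attach_map_subtype_val (G.D i)]
    rw [List.countP_map]
    induction (G.D i).attach with
    | nil => simp
    | cons a t iht =>
      obtain ⟨a, hmem⟩ := a
      cases a <;> simp [List.countP_cons, iht, Function.comp] <;> omega
  rw [hL]
  simp only [hV, add_mul, Finset.sum_add_distrib, ite_mul, one_mul, zero_mul]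
  rw [Finset.sum_ite_eq]
  simp only [Finset.mem_univ, if_true, cfg_sum_mul]
  rw [cfg_sum_swap, hCi, cfg_sum_add]
  congr 1
  apply List.map_congr_left
  intro s _
  obtain ⟨s, hmem⟩ := s
  cases s with
  | inl a => simp
  | inr j =>
    simp only []
    have hj : j.val < m := him ▸ G.lt i j hmem
    rw [ih j.val hj j rfl]
    simp

/-- consider a context-free grammar as above, generating
`T = val (X_n)` (start variable of index `G.n - 1`).  If every variable labels at least
one node of the derivation tree, then the total number of terminal occurrences in all
righthand sides, `Σ_i (number of positions of D (X_i) holding a terminal)`, is at most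
`|T|`. -/
theorem cfg_terminal_positions_le_length {α : Type*} (G : CFGGrammar α) (hn : 0 < G.n)
    (hall : ∀ X : Fin G.n, 1 ≤ G.voccBelow X ⟨G.n - 1, by omega⟩) :
    (∑ i : Fin G.n, (G.D i).countP (fun s => s.isLeft)) ≤
      (G.val ⟨G.n - 1, by omega⟩).length := by
  rw [cfg_key G _ ⟨G.n - 1, by omega⟩ rfl]
  apply Finset.sum_le_sum
  intro X _
  exact Nat.le_mul_of_pos_left _ (hall X)
end
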